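/- Let H_1 and H_2 be additive subgroups of ℝ, each equipped with a Polish group topology making the inclusion H_i ↪ ℝ continuous, and suppose H_1 ≠ ℝ and H_2 ≠ ℝ (as sets). Then the surjective continuous homomorphism H_1 × H_2 → ℝ, (x,y) ↦ x + y (assuming H_1 + H_2 = ℝ) admits no continuous group-homomorphism splitting ℝ → H_1 × H_2. -/

import Mathlib

lemma range_ne_univ_zero (θ : ℝ →+ ℝ) (hθ : Continuous θ) {S : Set ℝ}
    (hsub : Set.range θ ⊆ S) (hS : S ≠ Set.univ) : θ 1 = 0 := by
  by_contra h
  apply hS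
  rw [Set.eq_univ_iff_forall]
  intro r
  have hlin : ∀ x : ℝ, θ x = x • θ 1 := by
    intro x
    have := (θ.toRealLinearMap hθ).map_smul x (1 : ℝ)
    simpa [AddMonoidHom.coe_toRealLinearMap] using this
  have : θ (r / θ 1) = r := by
    rw [hlin, smul_eq_mul]; field_simp
  exact hsub ⟨_, this⟩

/-- Let `H₁, H₂` be additive subgroups of `ℝ`, each carrying a Polish group topology making
the inclusion into `ℝ` continuous, with `H₁ ≠ ℝ ≠ H₂` and `H₁ + H₂ = ℝ`.  Then the surjective
continuous homomorphism `H₁ × H₂ → ℝ, (x,y) ↦ x + y` admits no continuous homomorphic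
splitting `ℝ → H₁ × H₂`.  The subgroups `Hᵢ` are modelled as Polish topological additive
groups `T₁, T₂` together with continuous injective additive embeddings `ι₁, ι₂` into `ℝ`. -/
theorem stmt_2 {T₁ T₂ : Type*}
    [TopologicalSpace T₁] [AddGroup T₁] [IsTopologicalAddGroup T₁] [PolishSpace T₁]
    [TopologicalSpace T₂] [AddGroup T₂] [IsTopologicalAddGroup T₂] [PolishSpace T₂]
    (ι₁ : T₁ →+ ℝ) (ι₂ : T₂ →+ ℝ)
    (hc₁ : Continuous ι₁) (hc₂ : Continuous ι₂)
    (hi₁ : Function.Injective ι₁) (hi₂ : Function.Injective ι₂)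
    (h₁ : Set.range ι₁ ≠ Set.univ) (h₂ : Set.range ι₂ ≠ Set.univ)
    (hsum : ∀ x : ℝ, ∃ y z, ι₁ y + ι₂ z = x) :
    ¬ ∃ s : ℝ →+ T₁ × T₂, Continuous s ∧ ∀ x : ℝ, ι₁ (s x).1 + ι₂ (s x).2 = x := by
  rintro ⟨s, hs, hx⟩
  set θ₁ : ℝ →+ ℝ := ι₁.comp ((AddMonoidHom.fst T₁ T₂).comp s) with hθ₁
  set θ₂ : ℝ →+ ℝ := ι₂.comp ((AddMonoidHom.snd T₁ T₂).comp s) with hθ₂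
  have hcθ₁ : Continuous θ₁ := hc₁.comp (continuous_fst.comp hs)
  have hcθ₂ : Continuous θ₂ := hc₂.comp (continuous_snd.comp hs)
  have hr₁ : Set.range θ₁ ⊆ Set.range ι₁ := by rintro _ ⟨x, rfl⟩; exact ⟨_, rfl⟩
  have hr₂ : Set.range θ₂ ⊆ Set.range ι₂ := by rintro _ ⟨x, rfl⟩; exact ⟨_, rfl⟩
  have hz₁ := range_ne_univ_zero θ₁ hcθ₁ hr₁ h₁
  have hz₂ := range_ne_univ_zero θ₂ hcθ₂ hr₂ h₂
  have := hx 1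
  simp only [hθ₁, hθ₂, AddMonoidHom.comp_apply] at hz₁ hz₂
  rw [show ι₁ (s 1).1 = 0 from hz₁, show ι₂ (s 1).2 = 0 from hz₂] at this
  norm_num at this
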